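/- Let C be an arclength-parametrized soliton with C'' = 𝔭_T(a), a = (α+A)C + v, T = C', and μ = ⟨a/‖a‖, T⟩. Then (d/ds)‖a‖ = ⟨â, (α+A)T⟩, and if μ ≥ 1 - c‖a‖^{-4} with ‖a‖ ≥ 1, then |(d/ds)‖a‖ - α| ≤ √(2c)·‖α+A‖·‖a‖^{-2}. -/

import Mathlib

open Matrix
open scoped RealInnerProductSpace

private lemma hasDerivAt_norm_of_ne {n : ℕ} {f : ℝ → EuclideanSpace ℝ (Fin n)}
    {f' : EuclideanSpace ℝ (Fin n)} {x : ℝ} (hf : HasDerivAt f f' x) (h0 : f x ≠ 0) :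
    HasDerivAt (fun t => ‖f t‖) (⟪f x, f'⟫ / ‖f x‖) x := by
  have hinner : HasDerivAt (fun t => ⟪f t, f t⟫) (⟪f x, f'⟫ + ⟪f', f x⟫) x :=
    hf.inner ℝ hf
  have hpos : (0:ℝ) < ⟪f x, f x⟫ := by
    rw [real_inner_self_eq_norm_sq]
    have : ‖f x‖ ≠ 0 := norm_ne_zero_iff.2 h0
    positivity
  have hsqrt := (Real.hasDerivAt_sqrt hpos.ne').comp x hinner
  have hfun : (fun t => Real.sqrt ⟪f t, f t⟫) = fun t => ‖f t‖ := by
    funext t; rw [norm_eq_sqrt_real_inner]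
  simp only [Function.comp_def] at hsqrt
  rw [hfun] at hsqrt
  convert hsqrt using 1
  case e'_4 => rfl
  case e'_5 => rfl
  rw [real_inner_comm f' (f x), norm_eq_sqrt_real_inner]
  have h1 : Real.sqrt ⟪f x, f x⟫ ≠ 0 := by positivity
  field_simp
  ring

theorem stmt16 (n : ℕ) (α : ℝ) (A : Matrix (Fin n) (Fin n) ℝ) (hA : Aᵀ = -A)
    (v : EuclideanSpace ℝ (Fin n)) (c : ℝ) (hc : 0 < c)
    (C : ℝ → EuclideanSpace ℝ (Fin n)) (a : ℝ → EuclideanSpace ℝ (Fin n)) (μ : ℝ → ℝ)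
    (hCd : ContDiff ℝ 2 C)
    (harc : ∀ s, ‖deriv C s‖ = 1)
    (ha : ∀ s, a s = α • C s + A.toEuclideanLin (C s) + v)
    (hane : ∀ s, a s ≠ 0)
    (heq : ∀ s, deriv (deriv C) s = a s - ⟪a s, deriv C s⟫ • deriv C s)
    (hμ : ∀ s, μ s = ⟪‖a s‖⁻¹ • a s, deriv C s⟫)
    (L : EuclideanSpace ℝ (Fin n) →L[ℝ] EuclideanSpace ℝ (Fin n))
    (hL : L = α • (1 : EuclideanSpace ℝ (Fin n) →L[ℝ] EuclideanSpace ℝ (Fin n))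
      + Matrix.toEuclideanCLM (𝕜 := ℝ) A) :
    (∀ s, deriv (fun s' => ‖a s'‖) s
        = ⟪‖a s‖⁻¹ • a s, α • deriv C s + A.toEuclideanLin (deriv C s)⟫) ∧
    (∀ s, 1 ≤ ‖a s‖ → 1 - c / ‖a s‖ ^ 4 ≤ μ s →
      |deriv (fun s' => ‖a s'‖) s - α| ≤ Real.sqrt (2 * c) * ‖L‖ / ‖a s‖ ^ 2) := by
  have hLapp : ∀ x : EuclideanSpace ℝ (Fin n), L x = α • x + A.toEuclideanLin x := by
    intro x
    rw [hL]
    simp [← Matrix.coe_toEuclideanCLM_eq_toEuclideanLin (𝕜 := ℝ) A]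
  have haL : ∀ s, a s = L (C s) + v := fun s => by rw [ha, hLapp]
  have hkey : ∀ s, deriv (fun s' => ‖a s'‖) s
      = ⟪‖a s‖⁻¹ • a s, L (deriv C s)⟫ := by
    intro s
    have hC1 : HasDerivAt C (deriv C s) s :=
      ((hCd.differentiable (by norm_num)) s).hasDerivAt
    have haD : HasDerivAt a (L (deriv C s)) s := by
      have h1 : HasDerivAt (fun t => L (C t) + v) (L (deriv C s)) s :=
        (L.hasFDerivAt.comp_hasDerivAt s hC1).add_const v
      exact h1.congr_of_eventuallyEq (Filter.Eventually.of_forall fun t => haL t)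
    rw [(hasDerivAt_norm_of_ne haD (hane s)).deriv, real_inner_smul_left]
    rw [div_eq_inv_mul]
  refine ⟨?_, ?_⟩
  · intro s
    rw [hkey s, hLapp]
  · intro s hr hμs
    set r := ‖a s‖ with hrdef
    have hr0 : (0:ℝ) < r := lt_of_lt_of_le one_pos hr
    set T := deriv C s with hT
    set b : EuclideanSpace ℝ (Fin n) := r⁻¹ • a s with hb
    have hbn : ‖b‖ = 1 := by
      rw [hb, norm_smul, norm_inv, norm_norm, ← hrdef, inv_mul_cancel₀ hr0.ne']
    have hanti : ⟪T, (Matrix.toEuclideanCLM (𝕜 := ℝ) A) T⟫ = 0 := by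
      have hadj : ContinuousLinearMap.adjoint (Matrix.toEuclideanCLM (𝕜 := ℝ) A)
          = - Matrix.toEuclideanCLM (𝕜 := ℝ) A := by
        rw [← ContinuousLinearMap.star_eq_adjoint, ← map_star, star_eq_conjTranspose]
        have hAH : Aᴴ = -A := by simpa using hA
        rw [hAH, map_neg]
      have h2 := ContinuousLinearMap.adjoint_inner_left
        (𝕜 := ℝ) (Matrix.toEuclideanCLM (𝕜 := ℝ) A) T T
      rw [hadj] at h2
      simp only [ContinuousLinearMap.neg_apply, inner_neg_left] at h2
      have hsymm := real_inner_comm T ((Matrix.toEuclideanCLM (𝕜 := ℝ) A) T)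
      linarith [h2, hsymm.symm ▸ h2]
    have hTLT : ⟪T, L T⟫ = α := by
      rw [hL]
      simp only [ContinuousLinearMap.add_apply, ContinuousLinearMap.smul_apply,
        ContinuousLinearMap.one_apply, inner_add_right, real_inner_smul_right]
      rw [real_inner_self_eq_norm_sq, harc s, hanti]
      ring
    have hderiv : deriv (fun s' => ‖a s'‖) s - α = ⟪b - T, L T⟫ := by
      rw [hkey s, inner_sub_left, hTLT]
    have hμb : μ s = ⟪b, T⟫ := hμ s
    have hbT2 : ‖b - T‖ ^ 2 = 2 - 2 * μ s := by
      rw [← real_inner_self_eq_norm_sq, real_inner_sub_sub_self, real_inner_self_eq_norm_sq,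
        real_inner_self_eq_norm_sq, hbn, harc s, hμb]
      ring
    have h4 : (0:ℝ) < r ^ 4 := by positivity
    have hbound2 : ‖b - T‖ ^ 2 ≤ 2 * c / r ^ 4 := by
      rw [hbT2]
      have h5 : 1 - c / r ^ 4 ≤ μ s := hμs
      have h6 : 2 * c / r ^ 4 = 2 * (c / r ^ 4) := by ring
      rw [h6]
      linarith
    have hq : (Real.sqrt (2 * c) / r ^ 2) ^ 2 = 2 * c / r ^ 4 := by
      rw [div_pow, Real.sq_sqrt (by positivity)]
      ring_nf
    have hbT : ‖b - T‖ ≤ Real.sqrt (2 * c) / r ^ 2 := by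
      have h1 : ‖b - T‖ ^ 2 ≤ (Real.sqrt (2 * c) / r ^ 2) ^ 2 := by rw [hq]; exact hbound2
      have h2 : (0:ℝ) ≤ Real.sqrt (2 * c) / r ^ 2 := by positivity
      have h3 := Real.sqrt_le_sqrt h1
      rwa [Real.sqrt_sq (norm_nonneg _), Real.sqrt_sq h2] at h3
    have hLT : ‖L T‖ ≤ ‖L‖ := by
      have := L.le_opNorm T
      rwa [harc s, mul_one] at this
    calc |deriv (fun s' => ‖a s'‖) s - α| = |⟪b - T, L T⟫| := by rw [hderiv]
      _ ≤ ‖b - T‖ * ‖L T‖ := abs_real_inner_le_norm _ _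
      _ ≤ (Real.sqrt (2 * c) / r ^ 2) * ‖L‖ :=
          mul_le_mul hbT hLT (norm_nonneg _) (by positivity)
      _ = Real.sqrt (2 * c) * ‖L‖ / r ^ 2 := by ring
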